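/- Suppose S_g^n(x) → ∞ as n → ∞ for all x ∈ X. Then the set of limit points of the sequence (R_n(x))_{n∈ℕ} is T-invariant: for every x, the limit-point set of (R_n(x)) equals the limit-point set of (R_n(Tx)). In particular, limsup_n R_n(Tx) = limsup_n R_n(x). -/

import Mathlib

open Finset Filter Topology

noncomputable def cocycle {X : Type*} (T : X → X) (w : X → ℝ) (x : X) (k : ℕ) : ℝ :=
  ∏ j ∈ Finset.range k, w (T^[j] x)

noncomputable def wSum {X : Type*} (T : X → X) (w : X → ℝ) (h : X → ℝ) (n : ℕ) (x : X) : ℝ :=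
  ∑ k ∈ Finset.range n, h (T^[k] x) * cocycle T w x k

noncomputable def ratio {X : Type*} (T : X → X) (w f g : X → ℝ) (n : ℕ) (x : X) : ℝ :=
  wSum T w f n x / wSum T w g n x

/-- Key identity: peeling off the first term of a weighted Birkhoff sum. -/
lemma wSum_succ {X : Type*} (T : X → X) (w h : X → ℝ) (x : X) (n : ℕ) :
    wSum T w h (n + 1) x = h x + w x * wSum T w h n (T x) := by
  unfold wSum
  rw [Finset.sum_range_succ', Finset.mul_sum]
  have h0 : h (T^[0] x) * cocycle T w x 0 = h x := by
    simp [cocycle]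
  rw [h0, add_comm]
  congr 1
  apply Finset.sum_congr rfl
  intro k _
  have hc : cocycle T w x (k + 1) = w x * cocycle T w (T x) k := by
    unfold cocycle
    rw [Finset.prod_range_succ']
    simp only [Function.iterate_succ_apply, Function.iterate_zero_apply]
    ring
  rw [Function.iterate_succ_apply, hc]
  ring

/-- Transfer of cluster points along asymptotically affine relations. -/
lemma mcp_affine {u v c e : ℕ → ℝ} (hc : Tendsto c atTop (𝓝 1))
    (he : Tendsto e atTop (𝓝 0))
    (hrel : ∀ᶠ n in atTop, v n = e n + c n * u n) {a : ℝ}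
    (h : MapClusterPt a atTop u) : MapClusterPt a atTop v := by
  obtain ⟨ψ, hψ, hut⟩ := TopologicalSpace.FirstCountableTopology.tendsto_subseq h
  have hψt : Tendsto ψ atTop atTop := hψ.tendsto_atTop
  apply MapClusterPt.of_comp hψt
  have h1 : Tendsto (fun n => e (ψ n) + c (ψ n) * u (ψ n)) atTop (𝓝 (0 + 1 * a)) :=
    (he.comp hψt).add ((hc.comp hψt).mul hut)
  rw [zero_add, one_mul] at h1
  exact (h1.congr' ((hψt.eventually hrel).mono fun n hn => hn.symm)).mapClusterPt

lemma mcp_affine_iff {u v c e : ℕ → ℝ} (hc : Tendsto c atTop (𝓝 1))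
    (he : Tendsto e atTop (𝓝 0))
    (hrel : ∀ᶠ n in atTop, v n = e n + c n * u n) (a : ℝ) :
    MapClusterPt a atTop v ↔ MapClusterPt a atTop u := by
  have hne : ∀ᶠ n in atTop, c n ≠ 0 := hc.eventually_ne one_ne_zero
  constructor
  · intro h
    have hc' : Tendsto (fun n => (c n)⁻¹) atTop (𝓝 1) := by
      have := hc.inv₀ one_ne_zero
      simpa using this
    have he' : Tendsto (fun n => -e n / c n) atTop (𝓝 0) := by
      have := (he.neg).div hc one_ne_zero
      rw [neg_zero, zero_div] at this; exact this
    refine mcp_affine hc' he' ?_ h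
    filter_upwards [hrel, hne] with n h1 h2
    rw [h1]; field_simp; ring
  · exact fun h => mcp_affine hc he hrel h

/-- Shifting a sequence by one does not change its cluster points. -/
lemma mcp_shift (v : ℕ → ℝ) (a : ℝ) :
    MapClusterPt a atTop (fun n => v (n + 1)) ↔ MapClusterPt a atTop v := by
  have h : (fun n => v (n + 1)) = v ∘ (fun n : ℕ => n + 1) := rfl
  rw [MapClusterPt, MapClusterPt, h, ← Filter.map_map, Filter.map_add_atTop_eq_nat]

/-- Two sets of reals that "almost contain" each other have the same infimum. -/
lemma sInf_eq_sInf_of_close {S T : Set ℝ}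
    (hST : ∀ a ∈ S, ∀ b, a < b → b ∈ T) (hTS : ∀ a ∈ T, ∀ b, a < b → b ∈ S) :
    sInf S = sInf T := by
  rcases S.eq_empty_or_nonempty with hS | hS
  · rcases T.eq_empty_or_nonempty with hT | hT
    · rw [hS, hT]
    · obtain ⟨a, ha⟩ := hT
      exact absurd (hTS a ha (a + 1) (by linarith)) (by simp [hS])
  · have hT : T.Nonempty := by
      obtain ⟨a, ha⟩ := hS
      exact ⟨a + 1, hST a ha (a + 1) (by linarith)⟩
    have hlb : ∀ c, c ∈ lowerBounds S ↔ c ∈ lowerBounds T := by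
      intro c
      constructor
      · intro hc b hb
        exact le_of_forall_gt_imp_ge_of_dense fun d hd => hc (hTS b hb d hd)
      · intro hc b hb
        exact le_of_forall_gt_imp_ge_of_dense fun d hd => hc (hST b hb d hd)
    by_cases hbdd : BddBelow S
    · have hbddT : BddBelow T := by
        obtain ⟨c, hc⟩ := hbdd
        exact ⟨c, (hlb c).1 hc⟩
      apply le_antisymm
      · exact le_csInf hT ((hlb _).1 fun b hb => csInf_le hbdd hb)
      · exact le_csInf hS ((hlb _).2 fun b hb => csInf_le hbddT hb)
    · have hbddT : ¬BddBelow T := by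
        rintro ⟨c, hc⟩
        exact hbdd ⟨c, (hlb c).2 hc⟩
      rw [Real.sInf_of_not_bddBelow hbdd, Real.sInf_of_not_bddBelow hbddT]

theorem limitPoints_T_invariant {X : Type*} (T : X → X) (f g w : X → ℝ)
    (hg : ∀ x, 0 < g x) (hw : ∀ x, 0 < w x)
    (hdiv : ∀ x, Tendsto (fun n : ℕ => wSum T w g n x) atTop atTop) :
    ∀ x : X,
      {a : ℝ | MapClusterPt a atTop (fun n : ℕ => ratio T w f g n (T x))} =
        {a : ℝ | MapClusterPt a atTop (fun n : ℕ => ratio T w f g n x)} ∧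
      limsup (fun n : ℕ => ratio T w f g n (T x)) atTop =
        limsup (fun n : ℕ => ratio T w f g n x) atTop := by
  intro x
  set A : ℕ → ℝ := fun n => wSum T w f n (T x) with hA
  set B : ℕ → ℝ := fun n => wSum T w g n (T x) with hB
  set u : ℕ → ℝ := fun n => ratio T w f g n (T x) with hu
  set v : ℕ → ℝ := fun n => ratio T w f g n x with hv
  have hcocpos : ∀ (y : X) (k : ℕ), 0 < cocycle T w y k := fun y k =>
    Finset.prod_pos fun j _ => hw _
  have hBpos : ∀ n : ℕ, 1 ≤ n → 0 < B n := by
    intro n hn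
    apply Finset.sum_pos (fun k _ => mul_pos (hg _) (hcocpos _ _))
    exact Finset.nonempty_range_iff.mpr (by omega)
  have hBnonneg : ∀ n : ℕ, 0 ≤ B n :=
    fun n => Finset.sum_nonneg fun k _ => le_of_lt (mul_pos (hg _) (hcocpos _ _))
  set D : ℕ → ℝ := fun n => g x + w x * B n with hD
  have hDpos : ∀ n, 0 < D n := fun n =>
    add_pos_of_pos_of_nonneg (hg x) (mul_nonneg (hw x).le (hBnonneg n))
  have hDtop : Tendsto D atTop atTop :=
    tendsto_atTop_add_const_left _ _ ((hdiv (T x)).const_mul_atTop (hw x))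
  set e : ℕ → ℝ := fun n => f x / D n with he'
  set c : ℕ → ℝ := fun n => (w x * B n) / D n with hc'
  have he : Tendsto e atTop (𝓝 0) := Tendsto.div_atTop tendsto_const_nhds hDtop
  have hc : Tendsto c atTop (𝓝 1) := by
    have h1 : Tendsto (fun n => g x / D n) atTop (𝓝 0) :=
      Tendsto.div_atTop tendsto_const_nhds hDtop
    have h2 : Tendsto (fun n => 1 - g x / D n) atTop (𝓝 (1 - 0)) :=
      tendsto_const_nhds.sub h1
    rw [sub_zero] at h2
    apply h2.congr
    intro n
    have hne := (hDpos n).ne'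
    field_simp [hc', hD]
    rw [hc']; dsimp only; rw [mul_div_cancel₀ _ hne]; simp only [hD]; ring
  have hcnonneg : ∀ n, 0 ≤ c n := fun n =>
    div_nonneg (mul_nonneg (hw x).le (hBnonneg n)) (hDpos n).le
  have hrel : ∀ᶠ n in atTop, v (n + 1) = e n + c n * u n := by
    filter_upwards [eventually_ge_atTop 1] with n hn
    have hBn := hBpos n hn
    have hvs : v (n + 1) = (f x + w x * A n) / D n := by
      simp only [hv, ratio]
      rw [wSum_succ, wSum_succ]
    rw [hvs]
    simp only [he', hc', hu, ratio, ← hA, ← hB]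
    have hDn := (hDpos n).ne'
    have hBn' : wSum T w g n (T x) ≠ 0 := hBn.ne'
    field_simp
    ring
  constructor
  · ext a
    simp only [Set.mem_setOf_eq, ← hu, ← hv]
    rw [← mcp_shift v a]
    exact (mcp_affine_iff hc he hrel a).symm
  · rw [limsup_eq, limsup_eq]
    apply sInf_eq_sInf_of_close
    · intro a ha b hab
      simp only [Set.mem_setOf_eq] at *
      have h1 : Tendsto (fun n => e n + c n * a) atTop (𝓝 (0 + 1 * a)) :=
        he.add (hc.mul tendsto_const_nhds)
      rw [zero_add, one_mul] at h1
      have h2 : ∀ᶠ n in atTop, e n + c n * a < b := h1.eventually_lt_const hab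
      have h3 : ∀ᶠ n in atTop, v (n + 1) ≤ b := by
        filter_upwards [hrel, ha, h2] with n h4 h5 h6
        calc v (n + 1) = e n + c n * u n := h4
          _ ≤ e n + c n * a := by
              have := mul_le_mul_of_nonneg_left h5 (hcnonneg n)
              linarith
          _ ≤ b := h6.le
      rw [Filter.eventually_atTop] at h3 ⊢
      obtain ⟨N, hN⟩ := h3
      refine ⟨N + 1, fun m hm => ?_⟩
      have := hN (m - 1) (by omega)
      rwa [Nat.sub_add_cancel (by omega)] at this
    · intro a ha b hab
      simp only [Set.mem_setOf_eq] at *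
      have hcev : ∀ᶠ n in atTop, 0 < c n := by
        filter_upwards [eventually_ge_atTop 1] with n hn
        exact div_pos (mul_pos (hw x) (hBpos n hn)) (hDpos n)
      have hva : ∀ᶠ n in atTop, v (n + 1) ≤ a := (tendsto_add_atTop_nat 1).eventually ha
      have h1 : Tendsto (fun n => (a - e n) / c n) atTop (𝓝 ((a - 0) / 1)) :=
        (tendsto_const_nhds.sub he).div hc one_ne_zero
      rw [sub_zero, div_one] at h1
      have h2 : ∀ᶠ n in atTop, (a - e n) / c n < b := h1.eventually_lt_const hab
      filter_upwards [hrel, hva, h2, hcev] with n h4 h5 h6 h7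
      have hun : u n = (v (n + 1) - e n) / c n := by
        rw [h4]; field_simp; ring
      rw [hun]
      calc (v (n + 1) - e n) / c n ≤ (a - e n) / c n := by
            gcongr
            all_goals linarith
        _ ≤ b := h6.le
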